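/- Two distinct points of V × S¹ have the same image under the map Ψ(x, t) = t·x only along V₀: if x, x' ∈ V and t, t' ∈ S¹ satisfy t·x = t'·x' and (x, t) ≠ (x', t'), then x ∈ V₀ and x' ∈ V₀, i.e. Σᵢ xᵢ = 0 and Σᵢ x'ᵢ = 0. -/
import Mathlib


open scoped BigOperators

/-- Failure of injectivity of `Ψ : V × S¹ → T⁷`, `Ψ(x,t) = t·x`, happens only along
`V₀ = {z ∈ V : Σᵢ zᵢ = 0}`: if `(x,t) ≠ (x',t')` in `V × S¹` have the same image,
then `x ∈ V₀` and `x' ∈ V₀`. -/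
theorem psi_injective_off_V0 :
    ∀ (x x' : Fin 7 → ℂ) (t t' : ℂ),
      (∀ i, ‖x i‖ = 1) → (∑ i, (x i).re) = 0 → (∑ i, (x i).im) ≤ 0 →
      (∀ i, ‖x' i‖ = 1) → (∑ i, (x' i).re) = 0 → (∑ i, (x' i).im) ≤ 0 →
      ‖t‖ = 1 → ‖t'‖ = 1 →
      (∀ i, t * x i = t' * x' i) → (x, t) ≠ (x', t') →
      (∑ i, x i) = 0 ∧ (∑ i, x' i) = 0 := by
  intro x x' t t' hx1 hxre hxim hx'1 hx're hx'im ht ht' heq hne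
  have ht0 : t ≠ 0 := by intro h; simp [h] at ht
  set u := t⁻¹ * t' with hu
  have hxeq : ∀ i, x i = u * x' i := by
    intro i
    have h := heq i
    rw [hu]
    field_simp
    linear_combination h
  have hsum : ∑ i, x i = u * ∑ i, x' i := by
    rw [Finset.mul_sum]
    exact Finset.sum_congr rfl fun i _ => hxeq i
  have hSre : (∑ i, x' i).re = 0 := by rw [Complex.re_sum]; exact hx're
  have hSim0 : (∑ i, x' i).im ≤ 0 := by rw [Complex.im_sum]; exact hx'im
  suffices hS : (∑ i, x' i) = 0 by
    exact ⟨by rw [hsum, hS, mul_zero], hS⟩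
  by_contra hS
  have hSim : (∑ i, x' i).im < 0 := by
    rcases hSim0.lt_or_eq with h | h
    · exact h
    · exact absurd (Complex.ext (by simp [hSre]) (by simp [h])) hS
  have hxre' : (∑ i, x i).re = 0 := by rw [Complex.re_sum]; exact hxre
  have h1 : (u * ∑ i, x' i).re = 0 := by rw [← hsum]; exact hxre'
  have huim : u.im = 0 := by
    rw [Complex.mul_re, hSre] at h1
    have h2 : u.im * (∑ i, x' i).im = 0 := by linarith
    rcases mul_eq_zero.mp h2 with h | h
    · exact h
    · exact absurd h hSim.ne
  have hun : ‖u‖ = 1 := by rw [hu, norm_mul, norm_inv, ht, ht']; norm_num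
  have hureal : u = (u.re : ℂ) := Complex.ext rfl (by simp [huim])
  have hure1 : |u.re| = 1 := by rw [hureal, Complex.norm_real] at hun; exact hun
  have h2 : (u * ∑ i, x' i).im ≤ 0 := by
    rw [← hsum, Complex.im_sum]; exact hxim
  rw [Complex.mul_im, huim, hSre] at h2
  have hure : u.re = 1 := by
    rcases abs_cases u.re with ⟨h, _⟩ | ⟨h, _⟩ <;> nlinarith
  have hu1 : u = 1 := by rw [hureal, hure]; norm_num
  have htt : t' = t := by
    have : t⁻¹ * t' = 1 := hu1
    field_simp at this
    exact this
  have hxx : x = x' := by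
    funext i
    rw [hxeq i, hu1, one_mul]
  exact hne (Prod.ext hxx htt.symm)
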